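/- Let V be a real finite-dimensional vector space, g a nondegenerate symmetric bilinear form on V, and T : V → V a nilpotent g-symmetric endomorphism (g(T·,·) is symmetric and Tⁿ = 0). For k ≥ 1 set W_k = T^{k-1}(Ker(T^k)) and define B_k : W_k × W_k → ℝ by B_k(a,b) = g(c,b) where a = T^{k-1}(c), c ∈ Ker(T^k). Then W_{k+1} ⊆ W_k, B_k is a well-defined symmetric bilinear form, and W_{k+1} = Ker(B_k); in particular B_n is nondegenerate on W_n whenever W_n ≠ 0 and W_{n+1} = 0. -/

import Mathlib

/-- **Partial signature filtration of a nilpotent `g`-symmetric endomorphism.**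
For `g` nondegenerate symmetric and `T` nilpotent `g`-symmetric, with
`W_k = T^{k-1}(Ker T^k)` and `B_k(a,b) = g(c,b)` for `a = T^{k-1} c`, `c ∈ Ker T^k`:
`W_{k+1} ⊆ W_k`, `B_k` is well defined and symmetric, and `W_{k+1} = Ker B_k`;
in particular `B_n` is nondegenerate on `W_n`. -/
theorem nilpotent_partial_signature_filtration
    {V : Type*} [AddCommGroup V] [Module ℝ V] [FiniteDimensional ℝ V]
    (g : LinearMap.BilinForm ℝ V) (hgs : ∀ x y : V, g x y = g y x)
    (hnd : g.Nondegenerate)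
    (T : V →ₗ[ℝ] V) (n : ℕ) (hnil : T ^ n = 0)
    (hTsym : ∀ x y : V, g (T x) y = g x (T y)) :
    (∀ k : ℕ, 1 ≤ k →
      Submodule.map (T ^ k) (LinearMap.ker (T ^ (k + 1)))
        ≤ Submodule.map (T ^ (k - 1)) (LinearMap.ker (T ^ k))) ∧
    (∀ k : ℕ, 1 ≤ k → ∀ c ∈ LinearMap.ker (T ^ k), ∀ c' ∈ LinearMap.ker (T ^ k),
      (T ^ (k - 1)) c = (T ^ (k - 1)) c' →
      ∀ b ∈ Submodule.map (T ^ (k - 1)) (LinearMap.ker (T ^ k)), g c b = g c' b) ∧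
    (∀ k : ℕ, 1 ≤ k → ∀ c ∈ LinearMap.ker (T ^ k), ∀ d ∈ LinearMap.ker (T ^ k),
      g c ((T ^ (k - 1)) d) = g d ((T ^ (k - 1)) c)) ∧
    (∀ k : ℕ, 1 ≤ k → ∀ b : V,
      b ∈ Submodule.map (T ^ k) (LinearMap.ker (T ^ (k + 1))) ↔
        (b ∈ Submodule.map (T ^ (k - 1)) (LinearMap.ker (T ^ k)) ∧
          ∀ c ∈ LinearMap.ker (T ^ k), g c b = 0)) ∧
    (∀ b ∈ Submodule.map (T ^ (n - 1)) (LinearMap.ker (T ^ n)),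
      (∀ c ∈ LinearMap.ker (T ^ n), g c b = 0) → b = 0) := by
  have hrefl : g.IsRefl := fun x y h => by rw [hgs]; exact h
  -- iterated symmetry
  have key : ∀ (m : ℕ) (x y : V), g ((T ^ m) x) y = g x ((T ^ m) y) := by
    intro m
    induction m with
    | zero => simp
    | succ m ih =>
      intro x y
      simp only [pow_succ', Module.End.mul_apply]
      rw [hTsym, ih, ← Module.End.mul_apply, ← pow_succ, pow_succ', Module.End.mul_apply]
  -- part 1
  have part1 : ∀ k : ℕ, 1 ≤ k →
      Submodule.map (T ^ k) (LinearMap.ker (T ^ (k + 1)))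
        ≤ Submodule.map (T ^ (k - 1)) (LinearMap.ker (T ^ k)) := by
    intro k hk b hb
    obtain ⟨a, ha, rfl⟩ := hb
    refine ⟨T a, ?_, ?_⟩
    · show (T ^ k) (T a) = 0
      rw [← Module.End.mul_apply, ← pow_succ]
      exact ha
    · show (T ^ (k - 1)) (T a) = (T ^ k) a
      rw [← Module.End.mul_apply, ← pow_succ, Nat.sub_add_cancel hk]
  -- orthogonal of kernel equals range
  have ortho : ∀ m : ℕ, g.orthogonal (LinearMap.ker (T ^ m)) = LinearMap.range (T ^ m) := by
    intro m
    have hle : LinearMap.range (T ^ m) ≤ g.orthogonal (LinearMap.ker (T ^ m)) := by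
      rintro b ⟨a, rfl⟩
      intro c hc
      have : g c ((T ^ m) a) = g ((T ^ m) c) a := (key m c a).symm
      rw [this, LinearMap.mem_ker.mp hc, map_zero,
        LinearMap.zero_apply]
    refine (Submodule.eq_of_le_of_finrank_le hle ?_).symm
    rw [LinearMap.BilinForm.finrank_orthogonal hnd]
    have h1 := LinearMap.finrank_range_add_finrank_ker (T ^ m)
    omega
  have part4 : ∀ k : ℕ, 1 ≤ k → ∀ b : V,
      b ∈ Submodule.map (T ^ k) (LinearMap.ker (T ^ (k + 1))) ↔
        (b ∈ Submodule.map (T ^ (k - 1)) (LinearMap.ker (T ^ k)) ∧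
          ∀ c ∈ LinearMap.ker (T ^ k), g c b = 0) := by
    intro k hk b
    constructor
    · intro hb
      refine ⟨part1 k hk hb, ?_⟩
      intro c hc
      obtain ⟨a, _, rfl⟩ := hb
      rw [← key k c a, LinearMap.mem_ker.mp hc, map_zero, LinearMap.zero_apply]
    · rintro ⟨hb1, hb2⟩
      have hbo : b ∈ LinearMap.range (T ^ k) := by
        rw [← ortho k]
        intro c hc
        exact hb2 c hc
      obtain ⟨a, rfl⟩ := hbo
      refine ⟨a, ?_, rfl⟩
      show (T ^ (k + 1)) a = 0
      rw [pow_succ', Module.End.mul_apply]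
      -- T ((T^k) a) = 0 since (T^k) a = (T^(k-1)) d with d ∈ ker (T^k)
      obtain ⟨d, hd, hdeq⟩ := hb1
      rw [← hdeq, ← Module.End.mul_apply, ← pow_succ']
      have : k - 1 + 1 = k := Nat.succ_pred_eq_of_pos hk
      rw [this]
      exact LinearMap.mem_ker.mp hd
  refine ⟨part1, ?_, ?_, part4, ?_⟩
  · -- well-definedness
    intro k hk c hc c' hc' hcc' b hb
    obtain ⟨d, hd, rfl⟩ := hb
    have h : g (c - c') ((T ^ (k - 1)) d) = 0 := by
      rw [← key (k - 1), map_sub, hcc', sub_self, map_zero, LinearMap.zero_apply]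
    rw [map_sub, LinearMap.sub_apply, sub_eq_zero] at h
    exact h
  · -- symmetry
    intro k hk c hc d hd
    rw [← key (k-1) c d, hgs]
  · -- nondegeneracy on W_n
    intro b hb hbo
    have hker : LinearMap.ker (T ^ n) = ⊤ := by
      rw [hnil]; exact LinearMap.ker_zero
    apply hnd.1
    intro m
    rw [hgs]
    exact hbo m (hker ▸ Submodule.mem_top)
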